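/- There exists φ ∈ 𝒟 with φ ≠ 0 such that I(t·φ) → −∞ as t → +∞. -/

import Mathlib

noncomputable section

open Real Filter Set

namespace DPLap

/-- Forward difference operator. -/
def dlt (u : ℤ → ℝ) (n : ℤ) : ℝ := u (n + 1) - u n

/-- Positive part `u⁺`. -/
def pos (u : ℤ → ℝ) : ℤ → ℝ := fun n => max (u n) 0

/-- Negative part `u⁻`. -/
def neg (u : ℤ → ℝ) : ℤ → ℝ := fun n => min (u n) 0

/-- Summand of the `E`-norm. -/
def nsum (a b : ℤ → ℝ) (p : ℕ) (u : ℤ → ℝ) (n : ℤ) : ℝ :=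
  a n * |dlt u n| ^ p + b n * |u n| ^ p

/-- Membership in the space `E`. -/
def memE (a b : ℤ → ℝ) (p : ℕ) (u : ℤ → ℝ) : Prop :=
  Summable (nsum a b p u)

/-- The norm `‖u‖ = (∑ [a|Δu|^p + b|u|^p])^(1/p)`. -/
def dnorm (a b : ℤ → ℝ) (p : ℕ) (u : ℤ → ℝ) : ℝ :=
  (∑' n : ℤ, nsum a b p u n) ^ ((p : ℝ)⁻¹)

/-- Summand `c(n)|u(n)|^q ln(|u(n)|^r)` of the logarithmic term (with the
convention `0^q ln 0 = 0`, automatic from `Real.rpow` and `Real.log`). -/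
def logSummand (c : ℤ → ℝ) (q r : ℝ) (u : ℤ → ℝ) (n : ℤ) : ℝ :=
  c n * |u n| ^ q * Real.log (|u n| ^ r)

/-- Membership in `𝒟`. -/
def memD (a b c : ℤ → ℝ) (p : ℕ) (q r : ℝ) (u : ℤ → ℝ) : Prop :=
  memE a b p u ∧ Summable (logSummand c q r u)

/-- The energy functional `I`. -/
def En (a b c : ℤ → ℝ) (p : ℕ) (q r : ℝ) (u : ℤ → ℝ) : ℝ :=
  (1 / (p : ℝ)) * dnorm a b p u ^ p
    + (r / q ^ 2) * ∑' n : ℤ, c n * |u n| ^ q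
    - (1 / q) * ∑' n : ℤ, logSummand c q r u n

/-- The pairing `⟨I'(u), v⟩`. -/
def pr (a b c : ℤ → ℝ) (p : ℕ) (q r : ℝ) (u v : ℤ → ℝ) : ℝ :=
  (∑' n : ℤ, (a n * |dlt u n| ^ (p - 2) * dlt u n * dlt v n
      + b n * |u n| ^ (p - 2) * u n * v n))
    - ∑' n : ℤ, c n * |u n| ^ (q - 2) * u n * v n * Real.log (|u n| ^ r)

/-- The Nehari set `𝒩`. -/
def Nset (a b c : ℤ → ℝ) (p : ℕ) (q r : ℝ) : Set (ℤ → ℝ) :=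
  {u | memD a b c p q r u ∧ u ≠ 0 ∧ pr a b c p q r u u = 0}

/-- The sign-changing Nehari set `ℳ`. -/
def Mset (a b c : ℤ → ℝ) (p : ℕ) (q r : ℝ) : Set (ℤ → ℝ) :=
  {u | memD a b c p q r u ∧ pos u ≠ 0 ∧ neg u ≠ 0 ∧
      pr a b c p q r u (pos u) = 0 ∧ pr a b c p q r u (neg u) = 0}

/-- `m* = inf_ℳ I`. -/
def mStar (a b c : ℤ → ℝ) (p : ℕ) (q r : ℝ) : ℝ :=
  sInf (En a b c p q r '' Mset a b c p q r)

/-- `c* = inf_𝒩 I`. -/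
def cStar (a b c : ℤ → ℝ) (p : ℕ) (q r : ℝ) : ℝ :=
  sInf (En a b c p q r '' Nset a b c p q r)

theorem stmt17 (p : ℕ) (hp2 : 2 ≤ p) (hpe : Even p)
    (q r : ℝ) (hpq : (p : ℝ) < q) (hr : 1 ≤ r)
    (a b c : ℤ → ℝ)
    (ha : ∀ n, 0 < a n) (hb : ∀ n, 0 < b n) (hc : ∀ n, 0 < c n)
    (b0 : ℝ) (hb0 : 0 < b0) (hbb : ∀ n, b0 ≤ b n)
    (hbinf : Tendsto b cofinite atTop)
    (c0 : ℝ) (hc0 : 0 < c0) (hcc : ∀ n, c n ≤ c0)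
    (hcsum : Summable c) :
    ∃ φ : ℤ → ℝ, memD a b c p q r φ ∧ φ ≠ 0 ∧
      Tendsto (fun t : ℝ => En a b c p q r (fun n => t * φ n)) atTop atBot := by
  classical
  have hp0 : 0 < p := by omega
  have hpR : (0:ℝ) < (p:ℝ) := by exact_mod_cast hp0
  have hq0 : (0:ℝ) < q := hpR.trans hpq
  have hq1 : (1:ℝ) ≤ q := by
    have : (2:ℝ) ≤ (p:ℝ) := by exact_mod_cast hp2
    linarith
  set φ : ℤ → ℝ := fun n => if n = 0 then 1 else 0 with hφdef
  -- off-support vanishing of nsum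
  have hoff : ∀ (t : ℝ) (n : ℤ), n ∉ ({-1, 0} : Finset ℤ) →
      nsum a b p (fun m => t * φ m) n = 0 := by
    intro t n hn
    simp only [Finset.mem_insert, Finset.mem_singleton, not_or] at hn
    have h1 : n ≠ 0 := hn.2
    have h2 : n + 1 ≠ 0 := by omega
    simp [nsum, dlt, hφdef, h1, h2, zero_pow hp0.ne']
  have hsummable : ∀ t : ℝ, Summable (nsum a b p (fun m => t * φ m)) := by
    intro t
    exact summable_of_ne_finset_zero (hoff t)
  set K : ℝ := a (-1) + a 0 + b 0 with hKdef
  have hK : 0 < K := by have := ha (-1); have := ha 0; have := hb 0; positivity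
  have htsum : ∀ t : ℝ, (∑' n : ℤ, nsum a b p (fun m => t * φ m) n) = K * |t| ^ p := by
    intro t
    rw [tsum_eq_sum (hoff t), Finset.sum_pair (show (-1:ℤ) ≠ 0 by decide)]
    have e1 : nsum a b p (fun m => t * φ m) (-1) = a (-1) * |t| ^ p := by
      simp [nsum, dlt, hφdef, zero_pow hp0.ne']
    have e2 : nsum a b p (fun m => t * φ m) 0 = a 0 * |t| ^ p + b 0 * |t| ^ p := by
      simp [nsum, dlt, hφdef, abs_sub_comm]
    rw [e1, e2, hKdef]; ring
  have hd : ∀ t : ℝ, dnorm a b p (fun m => t * φ m) ^ p = K * |t| ^ p := by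
    intro t
    rw [dnorm, htsum t, ← Real.rpow_natCast ((K * |t| ^ p) ^ ((p:ℝ)⁻¹)) p,
      ← Real.rpow_mul (by positivity), inv_mul_cancel₀ hpR.ne', Real.rpow_one]
  have hcq : ∀ t : ℝ, (∑' n : ℤ, c n * |t * φ n| ^ q) = c 0 * |t| ^ q := by
    intro t
    rw [tsum_eq_single 0]
    · simp [hφdef]
    · intro n hn
      simp [hφdef, hn, Real.zero_rpow hq0.ne']
  have hlt : ∀ t : ℝ, (∑' n : ℤ, logSummand c q r (fun m => t * φ m) n)
      = c 0 * |t| ^ q * Real.log (|t| ^ r) := by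
    intro t
    rw [tsum_eq_single 0]
    · simp [logSummand, hφdef]
    · intro n hn
      simp [logSummand, hφdef, hn, Real.zero_rpow hq0.ne']
  refine ⟨φ, ⟨?_, ?_⟩, ?_, ?_⟩
  · -- memE
    exact (hsummable 1).congr (by intro n; simp [nsum, dlt])
  · -- logSummand summable : it is identically 0
    have : logSummand c q r φ = fun _ => 0 := by
      funext n
      by_cases hn : n = 0
      · simp [logSummand, hφdef, hn]
      · simp [logSummand, hφdef, hn, Real.zero_rpow hq0.ne']
    rw [this]; exact summable_zero
  · -- φ ≠ 0
    intro h
    have := congrFun h 0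
    simp [hφdef] at this
  · -- tendsto
    set C1 : ℝ := (1 / (p:ℝ)) * K + (r / q ^ 2) * c 0 + 1 with hC1
    set D : ℝ := c 0 * r / q with hDdef
    have hD : 0 < D := by
      have := hc 0
      have hr0 : (0:ℝ) < r := lt_of_lt_of_le one_pos hr
      positivity
    have hbound : ∀ᶠ t : ℝ in atTop,
        En a b c p q r (fun n => t * φ n) ≤ -t := by
      filter_upwards [eventually_ge_atTop (1:ℝ),
        Real.tendsto_log_atTop.eventually_ge_atTop (C1 / D)] with t ht1 htlog
      have ht0 : 0 < t := lt_of_lt_of_le one_pos ht1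
      have habs : |t| = t := abs_of_pos ht0
      have hEn : En a b c p q r (fun n => t * φ n)
          = (1 / (p:ℝ)) * (K * t ^ p) + (r / q ^ 2) * (c 0 * t ^ q)
            - (1 / q) * (c 0 * t ^ q * (r * Real.log t)) := by
        rw [En, hd t, hcq t, hlt t, habs, Real.log_rpow ht0]
      -- t^p ≤ t^q (ℕ-pow vs rpow)
      have hpow : (t : ℝ) ^ p ≤ t ^ q := by
        rw [← Real.rpow_natCast t p]
        exact Real.rpow_le_rpow_of_exponent_le ht1 hpq.le
      have htq0 : 0 < t ^ q := Real.rpow_pos_of_pos ht0 q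
      have htq : t ≤ t ^ q := by
        calc t = t ^ (1:ℝ) := (Real.rpow_one t).symm
        _ ≤ t ^ q := Real.rpow_le_rpow_of_exponent_le ht1 hq1
      have hDlog : C1 ≤ D * Real.log t := by
        rw [div_le_iff₀ hD] at htlog; linarith [htlog]
      have hterm3 : (1 / q) * (c 0 * t ^ q * (r * Real.log t))
          = (D * Real.log t) * t ^ q := by
        rw [hDdef]; field_simp
      rw [hEn, hterm3]
      have hKp : 0 ≤ (1 / (p:ℝ)) * K := by positivity
      have h1 : (1 / (p:ℝ)) * (K * t ^ p) ≤ (1 / (p:ℝ)) * K * t ^ q := by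
        rw [← mul_assoc]
        exact mul_le_mul_of_nonneg_left hpow hKp
      have h3 : C1 * t ^ q ≤ (D * Real.log t) * t ^ q :=
        mul_le_mul_of_nonneg_right hDlog htq0.le
      have hexp : C1 * t ^ q
          = (1 / (p:ℝ)) * K * t ^ q + (r / q ^ 2) * (c 0 * t ^ q) + t ^ q := by
        rw [hC1]; ring
      clear_value C1 D
      linarith [h1, h3, htq, hexp]
    exact tendsto_atBot_mono' atTop hbound tendsto_neg_atTop_atBot

end DPLap
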